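/- Let f be a 0-intersecting, k-homogeneous Boolean function on 𝔽₂^n with t monomials (the variable sets of distinct monomials are pairwise disjoint). With G = ∏_{i=0}^{k−1}(2^k − 2^i), the number of k-dimensional subspaces U with ∑_{x∈U} f(x) ≠ 0 equals (2^{kn−1}/G)·(1 − (1 − G/2^{k²−1})^t). -/

import Mathlib

/-- Sum of a function over a (finite) set of points. -/
noncomputable def setSum {α β : Type*} [Fintype α] [AddCommMonoid β]
    (S : Set α) (F : α → β) : β :=
  ∑ x ∈ (Set.toFinite S).toFinset, F x

open Matrix Finset

namespace Stmt14Aux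

/-- The sign character `ZMod 2 → ℚ`. -/
def eps (v : ZMod 2) : ℚ := if v = 0 then 1 else -1

lemma eps_add (a b : ZMod 2) : eps (a + b) = eps a * eps b := by
  have h : ∀ c : ZMod 2, c = 0 ∨ c = 1 := by decide
  have h2 : (1 + 1 : ZMod 2) = 0 := by decide
  rcases h a with rfl | rfl <;> rcases h b with rfl | rfl <;> simp [eps, h2] <;> norm_num

lemma eps_sum {ι : Type*} (s : Finset ι) (g : ι → ZMod 2) :
    eps (∑ i ∈ s, g i) = ∏ i ∈ s, eps (g i) := by
  classical
  induction s using Finset.induction_on with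
  | empty => simp [eps]
  | insert _ _ h ih => rw [Finset.sum_insert h, Finset.prod_insert h, eps_add, ih]

lemma zmod2_ne_zero : ∀ v : ZMod 2, v ≠ 0 → v = 1 := by decide

lemma zmod2_cases : ∀ v : ZMod 2, v = 0 ∨ v = 1 := by decide

lemma eps_zero : eps 0 = 1 := by simp [eps]

lemma eps_one : eps 1 = -1 := by simp [eps]

lemma eps_ite (v : ZMod 2) : eps v = if v = 1 then (-1 : ℚ) else 1 := by
  rcases zmod2_cases v with rfl | rfl <;> simp [eps_zero, eps_one]

/-- Lemma A: the sum over all inputs of the product of the coordinates of a square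
linear map is `1` if the map is bijective and `0` otherwise. -/
lemma sum_prod_dot {k : ℕ} {J : Type*} [Fintype J] [DecidableEq J]
    (hJ : Fintype.card J = k) (v : J → (Fin k → ZMod 2)) :
    (∑ y : Fin k → ZMod 2, ∏ j : J, v j ⬝ᵥ y) =
      if Function.Bijective (Matrix.toLin' (Matrix.of v)) then 1 else 0 := by
  have hentry : ∀ (y : Fin k → ZMod 2) (j : J), Matrix.toLin' (Matrix.of v) y j = v j ⬝ᵥ y :=
    fun y j => rfl
  by_cases hbij : Function.Bijective (Matrix.toLin' (Matrix.of v))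
  · rw [if_pos hbij]
    have h1 : (∑ y : Fin k → ZMod 2, ∏ j : J, v j ⬝ᵥ y)
        = ∑ z : J → ZMod 2, ∏ j : J, z j := by
      refine Fintype.sum_bijective _ hbij _ _ (fun y => ?_)
      exact Finset.prod_congr rfl fun j _ => (hentry y j).symm
    rw [h1]
    have h2 := (Finset.prod_univ_sum (fun _ : J => (Finset.univ : Finset (ZMod 2)))
      (fun _ a => a))
    rw [Fintype.piFinset_univ] at h2
    rw [← h2]
    have : (∑ a : ZMod 2, a) = 1 := by decide
    simp [this]
  · rw [if_neg hbij]
    -- the map is not injective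
    have hninj : ¬ Function.Injective (Matrix.toLin' (Matrix.of v)) := by
      intro hinj
      exact hbij ((Fintype.bijective_iff_injective_and_card _).2
        ⟨hinj, by simp [Fintype.card_fun, hJ]⟩)
    rw [← LinearMap.ker_eq_bot] at hninj
    obtain ⟨y₀, hy₀mem, hy₀⟩ := (Submodule.ne_bot_iff _).1 hninj
    have hy₀ker : Matrix.toLin' (Matrix.of v) y₀ = 0 := LinearMap.mem_ker.1 hy₀mem
    refine Finset.sum_ninvolution (fun y => y + y₀) ?_ ?_ (fun _ => Finset.mem_univ _) ?_
    · intro y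
      have heq : (∏ j : J, v j ⬝ᵥ (y + y₀)) = ∏ j : J, v j ⬝ᵥ y := by
        refine Finset.prod_congr rfl fun j _ => ?_
        rw [dotProduct_add]
        have : v j ⬝ᵥ y₀ = 0 := by
          have := congrFun hy₀ker j
          rwa [hentry] at this
        rw [this, add_zero]
      rw [heq, CharTwo.add_self_eq_zero]
    · intro y _
      intro h
      exact hy₀ (by simpa using congrArg (fun z => z - y) h)
    · intro y
      have h0 : y₀ + y₀ = 0 := by funext c; exact CharTwo.add_self_eq_zero _
      show y + y₀ + y₀ = y
      rw [add_assoc, h0, add_zero]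

/-- Lemma C: the number of bijective linear maps from `Fin k → ZMod 2` to a
`k`-dimensional `ZMod 2`-vector space. -/
lemma card_bij_linmaps {k : ℕ} {B : Type*} [AddCommGroup B] [Module (ZMod 2) B] [Finite B]
    (hB : Module.finrank (ZMod 2) B = k) :
    Nat.card {φ : (Fin k → ZMod 2) →ₗ[ZMod 2] B // Function.Bijective φ} =
      ∏ i ∈ Finset.range k, (2 ^ k - 2 ^ i) := by
  haveI : Fact (Nat.Prime 2) := ⟨by norm_num⟩
  haveI : FiniteDimensional (ZMod 2) B := Module.Finite.of_finite
  set b := Pi.basisFun (ZMod 2) (Fin k) with hb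
  have hfr : Module.finrank (ZMod 2) (Fin k → ZMod 2) = k := by
    simp [Module.finrank_fintype_fun_eq_card]
  have bij_of_li : ∀ s : Fin k → B, LinearIndependent (ZMod 2) s →
      Function.Bijective (b.constr ℕ s) := by
    intro s hs
    have hinj : Function.Injective (b.constr ℕ s) := by
      rw [← LinearMap.ker_eq_bot]
      rw [Submodule.eq_bot_iff]
      intro x hx
      have h1 : (b.constr ℕ s) x = ∑ i, x i • s i := by
        rw [Module.Basis.constr_apply_fintype]
        simp [hb]
      have h2 : ∀ i, x i = 0 := by
        apply Fintype.linearIndependent_iff.1 hs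
        rw [← h1]
        exact LinearMap.mem_ker.1 hx
      funext i
      exact h2 i
    exact ⟨hinj, (LinearMap.injective_iff_surjective_of_finrank_eq_finrank
      (by rw [hfr, hB])).1 hinj⟩
  have li_of_bij : ∀ φ : (Fin k → ZMod 2) →ₗ[ZMod 2] B, Function.Bijective φ →
      LinearIndependent (ZMod 2) (fun i => φ (b i)) := by
    intro φ hφ
    exact (b.linearIndependent).map' φ (LinearMap.ker_eq_bot.2 hφ.1)
  let e : {s : Fin k → B // LinearIndependent (ZMod 2) s} ≃
      {φ : (Fin k → ZMod 2) →ₗ[ZMod 2] B // Function.Bijective φ} :=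
    { toFun := fun s => ⟨b.constr ℕ s.1, bij_of_li s.1 s.2⟩
      invFun := fun φ => ⟨fun i => φ.1 (b i), li_of_bij φ.1 φ.2⟩
      left_inv := fun s => Subtype.ext (funext fun i => b.constr_basis ℕ s.1 i)
      right_inv := fun φ => Subtype.ext (b.ext fun i => b.constr_basis ℕ _ i) }
  rw [← Nat.card_congr e]
  rw [card_linearIndependent (by rw [hB])]
  rw [hB, ZMod.card]
  exact Fin.prod_univ_eq_prod_range (fun j => 2 ^ k - 2 ^ j) k

/-- Lemma D: sums of products of functions depending on disjoint blocks of
coordinates factor. -/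
lemma sum_prod_blocks {ι L : Type*} [Fintype ι] [DecidableEq ι] [Fintype L] {t : ℕ}
    (I : Fin t → Finset ι) (hdisj : ∀ i j : Fin t, i ≠ j → Disjoint (I i) (I j))
    (G : ∀ i : Fin t, ({x // x ∈ I i} → L) → ℚ) (s : Finset (Fin t)) :
    (∑ R : ι → L, ∏ i ∈ s, G i (fun j => R j.1)) * (Fintype.card L : ℚ) ^ (∑ i ∈ s, (I i).card)
      = (∏ i ∈ s, ∑ v : ({x // x ∈ I i} → L), G i v)
        * (Fintype.card L : ℚ) ^ (Fintype.card ι) := by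
  classical
  induction s using Finset.induction_on with
  | empty => simp [Finset.card_univ, Fintype.card_fun]
  | @insert a s ha ih =>
    have key : (∑ R : ι → L, G a (fun j => R j.1) * ∏ i ∈ s, G i (fun j => R j.1))
        * (Fintype.card L : ℚ) ^ (I a).card
        = (∑ v : ({x // x ∈ I a} → L), G a v)
          * (∑ R : ι → L, ∏ i ∈ s, G i (fun j => R j.1)) := by
      set F : ({x // x ∈ I a} → L) × (ι → L) → ℚ :=
        fun p => G a p.1 * ∏ i ∈ s, G i (fun j => p.2 j.1) with hFdef
      let σ : ({x // x ∈ I a} → L) × (ι → L) → ({x // x ∈ I a} → L) × (ι → L) :=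
        fun p => (fun j => p.2 j.1,
          fun j => if h : j ∈ I a then p.1 ⟨j, h⟩ else p.2 j)
      have hσ : Function.Involutive σ := by
        intro p
        refine Prod.ext ?_ ?_
        · funext j
          simp [σ, j.2]
        · funext j
          by_cases h : j ∈ I a <;> simp [σ, h]
      have hswap : ∀ p, F (σ p) = G a (fun j => p.2 j.1) * ∏ i ∈ s, G i (fun j => p.2 j.1) := by
        intro p
        simp only [hFdef, σ]
        congr 1
        refine Finset.prod_congr rfl fun i hi => ?_
        congr 1
        funext j
        have hne : i ≠ a := fun h => ha (h ▸ hi)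
        have : (j : ι) ∉ I a := Finset.disjoint_left.mp (hdisj i a hne) j.2
        simp [this]
      have h1 : ∑ p : ({x // x ∈ I a} → L) × (ι → L), F (σ p)
          = ∑ p : ({x // x ∈ I a} → L) × (ι → L), F p :=
        Fintype.sum_bijective σ hσ.bijective _ _ (fun p => rfl)
      have h2 : ∑ p : ({x // x ∈ I a} → L) × (ι → L), F (σ p)
          = (∑ R : ι → L, G a (fun j => R j.1) * ∏ i ∈ s, G i (fun j => R j.1))
            * (Fintype.card L : ℚ) ^ (I a).card := by
        rw [Fintype.sum_prod_type]
        simp only [hswap]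
        rw [Finset.sum_const, Finset.card_univ, Fintype.card_fun, Fintype.card_coe]
        rw [nsmul_eq_mul]
        push_cast
        ring
      have h3 : ∑ p : ({x // x ∈ I a} → L) × (ι → L), F p
          = (∑ v : ({x // x ∈ I a} → L), G a v)
            * (∑ R : ι → L, ∏ i ∈ s, G i (fun j => R j.1)) := by
        rw [Fintype.sum_prod_type]
        rw [Finset.sum_mul]
        refine Finset.sum_congr rfl fun v _ => ?_
        rw [Finset.mul_sum]
      rw [← h2, h1, h3]
    rw [Finset.sum_insert ha, Finset.prod_insert ha, pow_add]
    simp only [Finset.prod_insert ha]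
    calc (∑ R : ι → L, G a (fun j => R j.1) * ∏ i ∈ s, G i (fun j => R j.1))
          * ((Fintype.card L : ℚ) ^ (I a).card * (Fintype.card L : ℚ) ^ (∑ i ∈ s, (I i).card))
        = ((∑ R : ι → L, G a (fun j => R j.1) * ∏ i ∈ s, G i (fun j => R j.1))
            * (Fintype.card L : ℚ) ^ (I a).card)
          * (Fintype.card L : ℚ) ^ (∑ i ∈ s, (I i).card) := by ring
      _ = ((∑ v : ({x // x ∈ I a} → L), G a v)
            * (∑ R : ι → L, ∏ i ∈ s, G i (fun j => R j.1)))
          * (Fintype.card L : ℚ) ^ (∑ i ∈ s, (I i).card) := by rw [key]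
      _ = (∑ v : ({x // x ∈ I a} → L), G a v)
          * ((∑ R : ι → L, ∏ i ∈ s, G i (fun j => R j.1))
            * (Fintype.card L : ℚ) ^ (∑ i ∈ s, (I i).card)) := by ring
      _ = (∑ v : ({x // x ∈ I a} → L), G a v)
          * ((∏ i ∈ s, ∑ v : ({x // x ∈ I i} → L), G i v)
            * (Fintype.card L : ℚ) ^ (Fintype.card ι)) := by rw [ih]
      _ = _ := by ring

end Stmt14Aux

set_option maxHeartbeats 2000000 in
theorem stmt_14 (n k t : ℕ) (hk : 1 ≤ k) (ht : 1 ≤ t)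
    (I : Fin t → Finset (Fin n))
    (hcard : ∀ i, (I i).card = k)
    (hdisj : ∀ i j, i ≠ j → Disjoint (I i) (I j))
    (f : (Fin n → ZMod 2) → ZMod 2)
    (hf : ∀ x, f x = ∑ i, ∏ j ∈ I i, x j) :
    (Set.ncard {U : Submodule (ZMod 2) (Fin n → ZMod 2) |
        Module.finrank (ZMod 2) U = k ∧
        setSum (U : Set (Fin n → ZMod 2)) f ≠ 0} : ℚ) =
      (2 : ℚ) ^ (k * n - 1) / (∏ i ∈ Finset.range k, ((2 : ℚ) ^ k - 2 ^ i)) *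
        (1 - (1 - (∏ i ∈ Finset.range k, ((2 : ℚ) ^ k - 2 ^ i)) / 2 ^ (k ^ 2 - 1)) ^ t) := by
  classical
  haveI : Fact (Nat.Prime 2) := ⟨by norm_num⟩
  open Stmt14Aux in
  set Φ : (Fin n → Fin k → ZMod 2) → ((Fin k → ZMod 2) →ₗ[ZMod 2] (Fin n → ZMod 2)) :=
    fun R => Matrix.toLin' (Matrix.of R) with hΦ
  set D : Fin t → (Fin n → Fin k → ZMod 2) → ZMod 2 :=
    fun i R => ∑ y : Fin k → ZMod 2, ∏ j ∈ I i, R j ⬝ᵥ y with hD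
  set SY : (Fin n → Fin k → ZMod 2) → ZMod 2 :=
    fun R => ∑ y : Fin k → ZMod 2, f (Φ R y) with hSYdef
  have hkn : k ≤ n := by
    have := Finset.card_le_univ (I ⟨0, ht⟩)
    simpa [hcard, Finset.card_univ] using this
  have hn1 : 1 ≤ n := hk.trans hkn
  have hentry : ∀ (R : Fin n → Fin k → ZMod 2) (y : Fin k → ZMod 2) (j : Fin n),
      Φ R y j = R j ⬝ᵥ y := fun _ _ _ => rfl
  have hSY : ∀ R, SY R = ∑ i, D i R := by
    intro R
    rw [hSYdef, hD]
    simp only [hf, hentry]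
    exact Finset.sum_comm
  have hfrW : Module.finrank (ZMod 2) (Fin k → ZMod 2) = k := by
    simp [Module.finrank_fintype_fun_eq_card]
  have hJcard : ∀ i : Fin t, Fintype.card {x // x ∈ I i} = k := fun i => by
    simp [Fintype.card_coe, hcard]
  have hDres : ∀ (i : Fin t) (R : Fin n → Fin k → ZMod 2),
      D i R = ∑ y : Fin k → ZMod 2, ∏ j : {x // x ∈ I i}, R j.1 ⬝ᵥ y := by
    intro i R
    rw [hD]
    exact Finset.sum_congr rfl fun y _ =>
      (Finset.prod_coe_sort (I i) (fun j => R j ⬝ᵥ y)).symm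
  have hDif : ∀ (i : Fin t) (R : Fin n → Fin k → ZMod 2),
      D i R = if Function.Bijective
          (Matrix.toLin' (Matrix.of (fun j : {x // x ∈ I i} => R j.1))) then 1 else 0 := by
    intro i R
    rw [hDres]
    exact Stmt14Aux.sum_prod_dot (hJcard i) _
  have hπ : ∀ (i : Fin t) (R : Fin n → Fin k → ZMod 2),
      Matrix.toLin' (Matrix.of (fun j : {x // x ∈ I i} => R j.1))
        = (LinearMap.funLeft (ZMod 2) (ZMod 2) (fun j : {x // x ∈ I i} => j.1)).comp (Φ R) :=
    fun i R => LinearMap.ext fun y => funext fun j => rfl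
  have hinj_of_D : ∀ (i : Fin t) (R : Fin n → Fin k → ZMod 2),
      D i R ≠ 0 → Function.Injective (Φ R) := by
    intro i R hD0
    rw [hDif] at hD0
    by_cases hb : Function.Bijective
        (Matrix.toLin' (Matrix.of (fun j : {x // x ∈ I i} => R j.1)))
    · have h1 := hb.injective
      rw [hπ i R, LinearMap.coe_comp] at h1
      exact Function.Injective.of_comp h1
    · rw [if_neg hb] at hD0
      exact absurd rfl hD0
  have hinj_of_SY : ∀ R, SY R = 1 → Function.Injective (Φ R) := by
    intro R h1
    by_contra hni
    have hall : ∀ i, D i R = 0 := by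
      intro i
      by_contra hDi
      exact hni (hinj_of_D i R hDi)
    rw [hSY R, Finset.sum_congr rfl (fun i _ => hall i)] at h1
    simp at h1
  have hsetSum : ∀ R : Fin n → Fin k → ZMod 2, Function.Injective (Φ R) →
      setSum ((LinearMap.range (Φ R) : Submodule (ZMod 2) (Fin n → ZMod 2)) :
        Set (Fin n → ZMod 2)) f = SY R := by
    intro R hinj
    unfold setSum
    have himg : (Set.toFinite ((LinearMap.range (Φ R) : Submodule (ZMod 2)
          (Fin n → ZMod 2)) : Set (Fin n → ZMod 2))).toFinset
        = Finset.image (⇑(Φ R)) Finset.univ := by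
      ext x
      simp only [Set.Finite.mem_toFinset, SetLike.mem_coe, LinearMap.mem_range,
        Finset.mem_image, Finset.mem_univ, true_and]
      try exact exists_congr fun a => eq_comm
    rw [himg, Finset.sum_image (fun a _ b _ h => hinj h)]
  have hinj_of_range : ∀ (ψ : (Fin k → ZMod 2) →ₗ[ZMod 2] (Fin n → ZMod 2))
      (U : Submodule (ZMod 2) (Fin n → ZMod 2)),
      Module.finrank (ZMod 2) U = k → LinearMap.range ψ = U → Function.Injective ψ := by
    intro ψ U hU hr
    rw [← LinearMap.ker_eq_bot]
    have h1 := LinearMap.finrank_range_add_finrank_ker ψ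
    rw [hr, hU, hfrW] at h1
    have h2 : Module.finrank (ZMod 2) (LinearMap.ker ψ) = 0 := by omega
    exact Submodule.finrank_eq_zero.1 h2
  -- the set of subspaces
  haveI hfinSub : Finite (Submodule (ZMod 2) (Fin n → ZMod 2)) :=
    Finite.of_injective (fun U => (U : Set (Fin n → ZMod 2))) SetLike.coe_injective
  have hSfin : {U : Submodule (ZMod 2) (Fin n → ZMod 2) |
      Module.finrank (ZMod 2) U = k ∧
      setSum (U : Set (Fin n → ZMod 2)) f ≠ 0}.Finite := Set.toFinite _
  rw [Set.ncard_eq_toFinset_card _ hSfin]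
  set SF := hSfin.toFinset with hSF
  set G : ℕ := ∏ i ∈ Finset.range k, (2 ^ k - 2 ^ i) with hG
  set Nmat := (Finset.univ.filter (fun R : Fin n → Fin k → ZMod 2 => SY R = 1)).card with hNm
  -- each fiber over U ∈ SF has cardinality G
  have fiber_card : ∀ U ∈ SF, (Finset.univ.filter
      (fun R : Fin n → Fin k → ZMod 2 => LinearMap.range (Φ R) = U)).card = G := by
    intro U hU
    have hUS := (Set.Finite.mem_toFinset hSfin).1 hU
    have hUfr : Module.finrank (ZMod 2) U = k := hUS.1
    have e1 : {R : Fin n → Fin k → ZMod 2 // LinearMap.range (Φ R) = U} ≃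
        {ψ : (Fin k → ZMod 2) →ₗ[ZMod 2] (Fin n → ZMod 2) // LinearMap.range ψ = U} :=
      Equiv.subtypeEquiv ((Matrix.of).trans Matrix.toLin'.toEquiv) (fun R => Iff.rfl)
    have e2 : {ψ : (Fin k → ZMod 2) →ₗ[ZMod 2] (Fin n → ZMod 2) // LinearMap.range ψ = U} ≃
        {φ : (Fin k → ZMod 2) →ₗ[ZMod 2] U // Function.Bijective φ} :=
      { toFun := fun ψ => ⟨LinearMap.codRestrict U ψ.1
          (fun x => by have hx := LinearMap.mem_range_self ψ.1 x; rwa [ψ.2] at hx), by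
          constructor
          · have hinj := hinj_of_range ψ.1 U hUfr ψ.2
            intro a b hab
            apply hinj
            exact congrArg Subtype.val hab
          · rintro ⟨u, hu⟩
            have : u ∈ LinearMap.range ψ.1 := by rw [ψ.2]; exact hu
            obtain ⟨y, hy⟩ := this
            exact ⟨y, Subtype.ext hy⟩⟩
        invFun := fun φ => ⟨U.subtype.comp φ.1, by
          rw [LinearMap.range_comp, LinearMap.range_eq_top.mpr φ.2.surjective,
            Submodule.map_top, Submodule.range_subtype]⟩
        left_inv := fun ψ => Subtype.ext (LinearMap.ext fun y => rfl)
        right_inv := fun φ => Subtype.ext (LinearMap.ext fun y => Subtype.ext rfl) }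
    calc (Finset.univ.filter
        (fun R : Fin n → Fin k → ZMod 2 => LinearMap.range (Φ R) = U)).card
        = Nat.card {R : Fin n → Fin k → ZMod 2 // LinearMap.range (Φ R) = U} := by
          rw [Nat.card_eq_fintype_card, Fintype.card_subtype]
      _ = Nat.card {φ : (Fin k → ZMod 2) →ₗ[ZMod 2] U // Function.Bijective φ} :=
          Nat.card_congr (e1.trans e2)
      _ = G := Stmt14Aux.card_bij_linmaps hUfr
  -- fibers partition the filtered matrices
  have claim1 : Nmat = SF.card * G := by
    rw [hNm]
    have hmem : ∀ R ∈ Finset.univ.filter (fun R : Fin n → Fin k → ZMod 2 => SY R = 1),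
        LinearMap.range (Φ R) ∈ SF := by
      intro R hR
      have hSY1 : SY R = 1 := (Finset.mem_filter.1 hR).2
      have hinj := hinj_of_SY R hSY1
      rw [Set.Finite.mem_toFinset]
      refine ⟨?_, ?_⟩
      · rw [LinearMap.finrank_range_of_inj hinj, hfrW]
      · rw [hsetSum R hinj, hSY1]
        exact one_ne_zero
    rw [Finset.card_eq_sum_card_fiberwise hmem]
    have hfib_eq : ∀ U ∈ SF, ((Finset.univ.filter
          (fun R : Fin n → Fin k → ZMod 2 => SY R = 1)).filter
          (fun R => LinearMap.range (Φ R) = U)).card = G := by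
      intro U hU
      rw [← fiber_card U hU]
      congr 1
      rw [Finset.filter_filter]
      apply Finset.filter_congr
      intro R _
      simp only [and_iff_right_iff_imp]
      intro hrange
      have hUS := (Set.Finite.mem_toFinset hSfin).1 hU
      have hinj := hinj_of_range (Φ R) U hUS.1 hrange
      have h1 : setSum ((LinearMap.range (Φ R) : Submodule (ZMod 2)
          (Fin n → ZMod 2)) : Set (Fin n → ZMod 2)) f = SY R := hsetSum R hinj
      rw [hrange] at h1
      have h2 : SY R ≠ 0 := by rw [← h1]; exact hUS.2
      exact Stmt14Aux.zmod2_ne_zero _ h2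
    rw [Finset.sum_congr rfl hfib_eq, Finset.sum_const, smul_eq_mul]
  -- epsilon counting
  set E := ∑ R : Fin n → Fin k → ZMod 2, Stmt14Aux.eps (SY R) with hE
  have hcard2k : Fintype.card (Fin k → ZMod 2) = 2 ^ k := by
    simp [Fintype.card_fun, ZMod.card]
  have hcardfun : Fintype.card (Fin n → Fin k → ZMod 2) = 2 ^ (k * n) := by
    rw [Fintype.card_fun, hcard2k, Fintype.card_fin, ← pow_mul]
  have hEcount : E = (2:ℚ)^(k*n) - 2 * Nmat := by
    rw [hE]
    rw [Finset.sum_congr rfl fun R _ => Stmt14Aux.eps_ite (SY R)]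
    rw [Finset.sum_ite, Finset.sum_const, Finset.sum_const]
    have hsplit := Finset.card_filter_add_card_filter_not
      (s := (Finset.univ : Finset (Fin n → Fin k → ZMod 2))) (p := fun R => SY R = 1)
    rw [Finset.card_univ, hcardfun, ← hNm] at hsplit
    have hle : Nmat ≤ 2 ^ (k * n) := by omega
    have hnegc : (Finset.univ.filter
        (fun R : Fin n → Fin k → ZMod 2 => ¬ SY R = 1)).card = 2 ^ (k * n) - Nmat := by
      omega
    rw [hnegc, nsmul_eq_mul, nsmul_eq_mul, Nat.cast_sub hle]
    push_cast
    ring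
  -- per-block sums
  have hblock : ∀ i : Fin t,
      (∑ v : {x // x ∈ I i} → (Fin k → ZMod 2),
        Stmt14Aux.eps (∑ y : Fin k → ZMod 2, ∏ j : {x // x ∈ I i}, v j ⬝ᵥ y))
      = (2:ℚ)^(k*k) - 2 * G := by
    intro i
    have h1 : ∀ v : {x // x ∈ I i} → (Fin k → ZMod 2),
        Stmt14Aux.eps (∑ y : Fin k → ZMod 2, ∏ j : {x // x ∈ I i}, v j ⬝ᵥ y)
        = if Function.Bijective (Matrix.toLin' (Matrix.of v)) then (-1:ℚ) else 1 := by
      intro v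
      rw [Stmt14Aux.sum_prod_dot (hJcard i) v]
      by_cases hb : Function.Bijective (Matrix.toLin' (Matrix.of v))
      · rw [if_pos hb, if_pos hb, Stmt14Aux.eps_one]
      · rw [if_neg hb, if_neg hb, Stmt14Aux.eps_zero]
    rw [Finset.sum_congr rfl fun v _ => h1 v]
    rw [Finset.sum_ite, Finset.sum_const, Finset.sum_const]
    have hcnt : (Finset.univ.filter (fun v : {x // x ∈ I i} → (Fin k → ZMod 2) =>
        Function.Bijective (Matrix.toLin' (Matrix.of v)))).card = G := by
      rw [← Fintype.card_subtype, ← Nat.card_eq_fintype_card, hG]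
      have e' : {v : {x // x ∈ I i} → (Fin k → ZMod 2) //
            Function.Bijective (Matrix.toLin' (Matrix.of v))} ≃
          {φ : (Fin k → ZMod 2) →ₗ[ZMod 2] ({x // x ∈ I i} → ZMod 2) //
            Function.Bijective φ} :=
        Equiv.subtypeEquiv ((Matrix.of).trans Matrix.toLin'.toEquiv) (fun v => Iff.rfl)
      rw [Nat.card_congr e']
      exact Stmt14Aux.card_bij_linmaps (by
        rw [Module.finrank_fintype_fun_eq_card, hJcard i])
    have htotv : Fintype.card ({x // x ∈ I i} → (Fin k → ZMod 2)) = 2 ^ (k * k) := by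
      rw [Fintype.card_fun, hcard2k, hJcard i, ← pow_mul]
    have hsplit := Finset.card_filter_add_card_filter_not
      (s := (Finset.univ : Finset ({x // x ∈ I i} → (Fin k → ZMod 2))))
      (p := fun v => Function.Bijective (Matrix.toLin' (Matrix.of v)))
    rw [Finset.card_univ, htotv, hcnt] at hsplit
    have hGle : G ≤ 2 ^ (k * k) := by omega
    have hnegc : (Finset.univ.filter (fun v : {x // x ∈ I i} → (Fin k → ZMod 2) =>
        ¬ Function.Bijective (Matrix.toLin' (Matrix.of v)))).card = 2 ^ (k * k) - G := by
      omega
    rw [hcnt, hnegc, nsmul_eq_mul, nsmul_eq_mul, Nat.cast_sub hGle]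
    push_cast
    ring
  -- apply the factorization lemma
  have hDb := Stmt14Aux.sum_prod_blocks I hdisj
      (fun i (v : {x // x ∈ I i} → (Fin k → ZMod 2)) =>
        Stmt14Aux.eps (∑ y : Fin k → ZMod 2, ∏ j : {x // x ∈ I i}, v j ⬝ᵥ y))
      Finset.univ
  have hEeq : (∑ R : Fin n → Fin k → ZMod 2, ∏ i : Fin t,
      Stmt14Aux.eps (∑ y : Fin k → ZMod 2, ∏ j : {x // x ∈ I i},
        (fun j : {x // x ∈ I i} => R j.1) j ⬝ᵥ y)) = E := by
    rw [hE]
    refine Finset.sum_congr rfl fun R _ => ?_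
    rw [hSY R, Stmt14Aux.eps_sum]
    refine Finset.prod_congr rfl fun i _ => ?_
    rw [hDres i R]
  have hsumcard : (∑ i : Fin t, (I i).card) = t * k := by
    simp [hcard, Finset.sum_const, Finset.card_univ, smul_eq_mul]
  rw [hsumcard, hcard2k, Fintype.card_fin] at hDb
  rw [hEeq] at hDb
  rw [Finset.prod_congr rfl (fun i _ => hblock i), Finset.prod_const,
    Finset.card_univ, Fintype.card_fin] at hDb
  push_cast at hDb
  -- arithmetic
  have hGcast : (G:ℚ) = ∏ i ∈ Finset.range k, ((2:ℚ)^k - 2^i) := by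
    rw [hG, Nat.cast_prod]
    refine Finset.prod_congr rfl fun i hi => ?_
    rw [Nat.cast_sub (Nat.pow_le_pow_right (by norm_num) (Finset.mem_range.1 hi).le)]
    push_cast
    ring
  have hGpos : (0:ℚ) < ∏ i ∈ Finset.range k, ((2:ℚ)^k - 2^i) := by
    apply Finset.prod_pos
    intro i hi
    have h2 : (2:ℚ)^i < 2^k := by
      apply pow_lt_pow_right₀ (by norm_num) (Finset.mem_range.1 hi)
    linarith
  have hGne : ((G:ℚ)) ≠ 0 := by rw [hGcast]; exact ne_of_gt hGpos
  have hkk1 : 1 ≤ k ^ 2 := by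
    have := Nat.mul_le_mul hk hk
    rw [pow_two]
    omega
  have hkn1 : 1 ≤ k * n := by
    have := Nat.mul_le_mul hk hn1
    omega
  have h2kk : (2:ℚ)^(k*k) = 2 * 2^(k^2 - 1) := by
    have h1 : k * k = (k^2 - 1) + 1 := by
      have : k^2 = k*k := pow_two k
      omega
    rw [h1, pow_succ]
    ring
  have h2kn : (2:ℚ)^(k*n) = 2 * 2^(k*n - 1) := by
    have h1 : k * n = (k*n - 1) + 1 := by omega
    calc (2:ℚ)^(k*n) = 2^((k*n-1)+1) := by rw [← h1]
      _ = 2 * 2^(k*n-1) := by rw [pow_succ]; ring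
  have hpows : ((2:ℚ)^k)^(t*k) = (2^(k^2 - 1) * 2)^t := by
    rw [← pow_mul]
    have h1 : k*(t*k) = (k*k)*t := by ring
    rw [h1, pow_mul, h2kk]
    ring
  have hpown : ((2:ℚ)^k)^n = 2^(k*n) := by rw [← pow_mul]
  have hAne : (2:ℚ)^(k^2-1) ≠ 0 := by positivity
  have hXeq : ((2:ℚ)^(k*k) - 2*G)^t
      = (2^(k^2-1)*2)^t * (1 - (G:ℚ)/2^(k^2-1))^t := by
    rw [← mul_pow]
    congr 1
    field_simp
    rw [h2kk]
    ring
  have hA2 : ((2:ℚ)^(k^2-1)*2)^t ≠ 0 := by positivity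
  rw [hpows, hpown, hXeq] at hDb
  have hE3 : E = 2^(k*n) * (1 - (G:ℚ)/2^(k^2-1))^t := by
    apply mul_right_cancel₀ hA2
    rw [hDb]
    ring
  have hN2 : 2*(Nmat:ℚ) = 2^(k*n) - 2^(k*n)*(1 - (G:ℚ)/2^(k^2-1))^t := by
    linear_combination hEcount - hE3
  have hNcast : (Nmat:ℚ) = (SF.card : ℚ) * G := by rw [claim1, Nat.cast_mul]
  have hfin2 : (SF.card:ℚ) * G = 2^(k*n-1) * (1 - (1 - (G:ℚ)/2^(k^2-1))^t) := by
    have h4 : 2*((SF.card:ℚ) * G) = 2*(2^(k*n-1) * (1 - (1 - (G:ℚ)/2^(k^2-1))^t)) := by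
      rw [← hNcast]
      linear_combination hN2 + (1 - (1 - (G:ℚ)/2^(k^2-1))^t) * h2kn
    exact mul_left_cancel₀ two_ne_zero h4
  rw [← hGcast]
  rw [div_mul_eq_mul_div, eq_div_iff hGne]
  linear_combination hfin2
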